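/- In the OCO-with-memory setting with constants D, G_f, L, H as above, choosing η = D / √(G_f(G_f + L H²) T) gives policy regret Σ_{t=H}^T f_t(x_{t-H},…,x_t) - min_{x∈𝒦} Σ_{t=H}^T f_t(x,…,x) ≤ 3 D √(G_f (G_f + L H²) T). -/

import Mathlib

open RealInnerProductSpace

section helpers
variable {E : Type*} [NormedAddCommGroup E] [InnerProductSpace ℝ E]

/-- Metric projection onto a convex set moves no further from points of the set. -/
lemma aux_proj (𝒦 : Set E) (hconvK : Convex ℝ 𝒦)
    (proj : E → E) (hprojmem : ∀ y, proj y ∈ 𝒦)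
    (hproj : ∀ y, ∀ z ∈ 𝒦, ‖proj y - y‖ ≤ ‖z - y‖)
    (y : E) {z : E} (hz : z ∈ 𝒦) : ‖proj y - z‖ ≤ ‖y - z‖ := by
  set p := proj y with hp
  have hVI : ⟪y - p, z - p⟫ ≤ 0 := by
    by_contra hc
    push_neg at hc
    set c := ⟪y - p, z - p⟫ with hcdef
    set b := ‖z - p‖ ^ 2 with hbdef
    have hb : 0 ≤ b := by positivity
    have key : ∀ θ : ℝ, 0 < θ → θ ≤ 1 → 2 * c ≤ θ * b := by
      intro θ h0 h1
      have hmem : p + θ • (z - p) ∈ 𝒦 := by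
        have h2 := hconvK (hprojmem y) hz (by linarith : (0:ℝ) ≤ 1 - θ) h0.le (by ring)
        have : (1 - θ) • p + θ • z = p + θ • (z - p) := by module
        rwa [this] at h2
      have h2 := hproj y _ hmem
      have h3 : ‖p - y‖ ^ 2 ≤ ‖p + θ • (z - p) - y‖ ^ 2 :=
        pow_le_pow_left₀ (norm_nonneg _) h2 2
      have hre : p + θ • (z - p) - y = (p - y) + θ • (z - p) := by module
      have hexp : ‖p + θ • (z - p) - y‖ ^ 2
          = ‖p - y‖ ^ 2 + 2 * (θ * ⟪p - y, z - p⟫) + θ ^ 2 * b := by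
        rw [hre, norm_add_sq_real, real_inner_smul_right, norm_smul]
        simp [hbdef, mul_pow, sq_abs]
      have hip : ⟪p - y, z - p⟫ = -c := by
        rw [hcdef, ← inner_neg_left]
        congr 1; abel
      nlinarith [h3]
    have hθ : (0:ℝ) < min 1 (c / (b + 1)) := by
      apply lt_min one_pos
      positivity
    have h4 := key _ hθ (min_le_left _ _)
    have h5 : min 1 (c / (b + 1)) * b ≤ (c / (b + 1)) * b :=
      mul_le_mul_of_nonneg_right (min_le_right _ _) hb
    have h6 : (c / (b + 1)) * b < c := by
      rw [div_mul_eq_mul_div, div_lt_iff₀ (by linarith)]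
      nlinarith
    linarith
  have hsq : ‖p - z‖ ^ 2 ≤ ‖y - z‖ ^ 2 := by
    have hre : y - z = (y - p) + (p - z) := by abel
    have hexp : ‖y - z‖ ^ 2 = ‖y - p‖ ^ 2 + 2 * ⟪y - p, p - z⟫ + ‖p - z‖ ^ 2 := by
      rw [hre, norm_add_sq_real]
    have hip : 0 ≤ ⟪y - p, p - z⟫ := by
      have : ⟪y - p, p - z⟫ = -⟪y - p, z - p⟫ := by
        rw [← inner_neg_right]; congr 1; abel
      linarith [hVI, this.ge, this.le]
    nlinarith [sq_nonneg ‖y - p‖]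
  exact (pow_le_pow_iff_left₀ (norm_nonneg _) (norm_nonneg _) two_ne_zero).mp hsq

/-- Gradient inequality for a convex function. -/
lemma aux_grad [CompleteSpace E] {s : Set E} {g : E → ℝ} (hg : ConvexOn ℝ s g) {x y : E}
    (hx : x ∈ s) (hy : y ∈ s) (hd : DifferentiableAt ℝ g x) :
    ⟪gradient g x, y - x⟫ ≤ g y - g x := by
  set v := y - x with hv
  set φ : ℝ → ℝ := fun θ => g (x + θ • v) with hφ
  have hder : HasDerivAt φ (⟪gradient g x, v⟫) 0 := by
    have hF : HasFDerivAt g ((InnerProductSpace.toDual ℝ E) (gradient g x)) x :=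
      hd.hasGradientAt.hasFDerivAt
    have hc : HasDerivAt (fun θ : ℝ => x + θ • v) v 0 := by
      simpa using ((hasDerivAt_id (0:ℝ)).smul_const v).const_add x
    have hF' : HasFDerivAt g ((InnerProductSpace.toDual ℝ E) (gradient g x))
        (x + (0:ℝ) • v) := by simpa using hF
    have h := hF'.comp_hasDerivAt 0 hc
    simp [hφ, InnerProductSpace.toDual_apply_apply] at h ⊢
    exact h
  have hslope : ∀ θ : ℝ, θ ∈ Set.Ioc (0:ℝ) 1 → slope φ 0 θ ≤ g y - g x := by
    intro θ hθ
    obtain ⟨h0, h1⟩ := hθ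
    have hcv := hg.2 hx hy (by linarith : (0:ℝ) ≤ 1 - θ) h0.le (by ring)
    have hpt : (1 - θ) • x + θ • y = x + θ • v := by rw [hv]; module
    rw [hpt] at hcv
    rw [slope_def_field, sub_zero, div_le_iff₀ h0]
    simp only [hφ, zero_smul, add_zero]
    simp only [smul_eq_mul] at hcv
    nlinarith
  have htend : Filter.Tendsto (slope φ 0) (nhdsWithin 0 (Set.Ioi 0))
      (nhds (⟪gradient g x, v⟫)) := by
    have h := hder.hasDerivWithinAt (s := Set.Ioi 0)
    have h2 := hasDerivWithinAt_iff_tendsto_slope.mp h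
    simpa [Set.diff_singleton_eq_self (by simp : (0:ℝ) ∉ Set.Ioi 0)] using h2
  refine le_of_tendsto htend ?_
  filter_upwards [Ioc_mem_nhdsGT_of_mem (by simp [zero_lt_one] : (0:ℝ) ∈ Set.Ico (0:ℝ) 1)]
    with θ hθ using hslope θ hθ

/-- Coordinate-wise Lipschitz bound summed over all coordinates. -/
lemma aux_lip {n : ℕ} {𝒦 : Set E} {L : ℝ}
    (F : (Fin n → E) → ℝ)
    (hlip : ∀ (v : Fin n → E) (j : Fin n) (xj : E),
      (∀ i, v i ∈ 𝒦) → xj ∈ 𝒦 → |F v - F (Function.update v j xj)| ≤ L * ‖v j - xj‖)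
    (v w : Fin n → E) (hv : ∀ i, v i ∈ 𝒦) (hw : ∀ i, w i ∈ 𝒦) :
    F v - F w ≤ L * ∑ j, ‖v j - w j‖ := by
  have main : ∀ s : Finset (Fin n),
      F v - F (fun j => if j ∈ s then w j else v j) ≤ L * ∑ j ∈ s, ‖v j - w j‖ := by
    intro s
    induction s using Finset.induction_on with
    | empty => simp
    | @insert j s hj ih =>
      have heq : (fun i => if i ∈ insert j s then w i else v i)
          = Function.update (fun i => if i ∈ s then w i else v i) j (w j) := by
        funext i
        by_cases h : i = j
        · subst h; simp [Function.update, hj]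
        · simp [Function.update, h, Finset.mem_insert]
      have hmem : ∀ i, (if i ∈ s then w i else v i) ∈ 𝒦 := fun i => by
        by_cases h : i ∈ s <;> simp [h, hv i, hw i]
      have h1 := hlip (fun i => if i ∈ s then w i else v i) j (w j) hmem (hw j)
      have h2 : (fun i => if i ∈ s then w i else v i) j = v j := by simp [hj]
      rw [if_neg hj] at h1
      rw [heq, Finset.sum_insert hj, mul_add]
      linarith [(abs_le.mp h1).2, ih]
  have h := main Finset.univ
  simpa using h

end helpers

set_option maxHeartbeats 2000000 in
/-- OCO-with-memory with the tuned step size `η = D/√(G_f(G_f+LH²)T)` achieves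
policy regret at most `3D√(G_f(G_f+LH²)T)`. -/
theorem stmt11 (d : ℕ) (𝒦 : Set (EuclideanSpace ℝ (Fin d)))
    (hconvK : Convex ℝ 𝒦) (hcompK : IsCompact 𝒦)
    (H T : ℕ) (D Gf L : ℝ) (hD0 : 0 < D) (hGf : 0 < Gf) (hL : 0 ≤ L) (hT : 0 < T)
    (f : ℕ → (Fin (H + 1) → EuclideanSpace ℝ (Fin d)) → ℝ)
    (hlip : ∀ (t : ℕ) (v : Fin (H + 1) → EuclideanSpace ℝ (Fin d))
      (j : Fin (H + 1)) (xj : EuclideanSpace ℝ (Fin d)),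
      (∀ i, v i ∈ 𝒦) → xj ∈ 𝒦 →
      |f t v - f t (Function.update v j xj)| ≤ L * ‖v j - xj‖)
    (hconv : ∀ t, ConvexOn ℝ 𝒦 (fun x => f t (fun _ => x)))
    (hdiff : ∀ t x, DifferentiableAt ℝ (fun x => f t (fun _ => x)) x)
    (hG : ∀ t, ∀ x ∈ 𝒦, ‖gradient (fun x => f t (fun _ => x)) x‖ ≤ Gf)
    (hD : ∀ x ∈ 𝒦, ∀ y ∈ 𝒦, ‖x - y‖ ≤ D)
    (proj : EuclideanSpace ℝ (Fin d) → EuclideanSpace ℝ (Fin d))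
    (hprojmem : ∀ y, proj y ∈ 𝒦)
    (hproj : ∀ y, ∀ z ∈ 𝒦, ‖proj y - y‖ ≤ ‖z - y‖)
    (x : ℕ → EuclideanSpace ℝ (Fin d)) (hxmem : ∀ t, x t ∈ 𝒦)
    (hupd : ∀ t, x (t + 1) = proj (x t -
      (D / Real.sqrt (Gf * (Gf + L * (H : ℝ) ^ 2) * T)) •
        gradient (fun x => f t (fun _ => x)) (x t))) :
    ∀ xstar ∈ 𝒦,
      ∑ t ∈ Finset.Icc H T, f t (fun j : Fin (H + 1) => x (t - H + (j : ℕ))) -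
        ∑ t ∈ Finset.Icc H T, f t (fun _ => xstar) ≤
      3 * D * Real.sqrt (Gf * (Gf + L * (H : ℝ) ^ 2) * T) := by
  intro xstar hxstar
  set S : ℝ := Gf * (Gf + L * (H : ℝ) ^ 2) * T with hSdef
  set η : ℝ := D / Real.sqrt S with hηdef
  have hT' : (0:ℝ) < T := by exact_mod_cast hT
  have hS : 0 < S := by
    have h2 : 0 < Gf + L * (H:ℝ)^2 := by positivity
    exact mul_pos (mul_pos hGf h2) hT'
  have hsq : 0 < Real.sqrt S := Real.sqrt_pos.mpr hS
  have hη : 0 < η := div_pos hD0 hsq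
  by_cases hHT : H ≤ T
  swap
  · rw [Finset.Icc_eq_empty (by omega)]
    simp
    positivity
  set g : ℕ → EuclideanSpace ℝ (Fin d) :=
    fun t => gradient (fun x => f t (fun _ => x)) (x t) with hgdef
  have hGt : ∀ t, ‖g t‖ ≤ Gf := fun t => hG t (x t) (hxmem t)
  have hGf0 : (0:ℝ) ≤ Gf := hGf.le
  -- step bound
  have hstep : ∀ s, ‖x (s+1) - x s‖ ≤ η * Gf := by
    intro s
    rw [hupd s]
    calc ‖proj (x s - η • g s) - x s‖ ≤ ‖(x s - η • g s) - x s‖ :=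
          aux_proj 𝒦 hconvK proj hprojmem hproj _ (hxmem s)
      _ = η * ‖g s‖ := by
          rw [show x s - η • g s - x s = -(η • g s) by abel, norm_neg, norm_smul,
            Real.norm_eq_abs, abs_of_pos hη]
      _ ≤ η * Gf := mul_le_mul_of_nonneg_left (hGt s) hη.le
  have hdist : ∀ a k : ℕ, ‖x (a + k) - x a‖ ≤ (k:ℝ) * (η * Gf) := by
    intro a k
    induction k with
    | zero => simp
    | succ k ih =>
      have h1 := hstep (a + k)
      have h2 : x (a + (k+1)) - x a = (x (a + k + 1) - x (a + k)) + (x (a + k) - x a) := by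
        rw [show a + (k+1) = a + k + 1 from rfl]; abel
      calc ‖x (a + (k+1)) - x a‖ ≤ ‖x (a+k+1) - x (a+k)‖ + ‖x (a+k) - x a‖ := by
            rw [h2]; exact norm_add_le _ _
        _ ≤ η * Gf + (k:ℝ) * (η * Gf) := add_le_add h1 ih
        _ = ((k:ℕ)+1:ℝ) * (η*Gf) := by ring
        _ = (((k+1:ℕ)):ℝ) * (η*Gf) := by push_cast; ring
  -- memory bound
  have hHH : ((H:ℝ)+1) * H ≤ 2 * (H:ℝ)^2 := by
    rcases Nat.eq_zero_or_pos H with h | h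
    · subst h; norm_num
    · have h1 : (1:ℝ) ≤ H := by exact_mod_cast h
      nlinarith
  have hmemb : ∀ t ∈ Finset.Icc H T,
      f t (fun j : Fin (H+1) => x (t - H + (j:ℕ))) - f t (fun _ => x t)
        ≤ 2 * L * (H:ℝ)^2 * η * Gf := by
    intro t ht
    obtain ⟨hHt, htT⟩ := Finset.mem_Icc.mp ht
    have hcoord : ∀ j : Fin (H+1), ‖x (t - H + (j:ℕ)) - x t‖ ≤ (H:ℝ) * (η * Gf) := by
      intro j
      have hj : (j:ℕ) ≤ H := Nat.lt_succ_iff.mp j.isLt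
      have he : t - H + (j:ℕ) + (H - (j:ℕ)) = t := by omega
      have h3 := hdist (t - H + (j:ℕ)) (H - (j:ℕ))
      rw [he] at h3
      rw [← norm_neg, neg_sub]
      calc ‖x t - x (t - H + (j:ℕ))‖ ≤ ((H - (j:ℕ) : ℕ):ℝ) * (η*Gf) := h3
        _ ≤ (H:ℝ) * (η*Gf) := by
            have h4 : ((H - (j:ℕ) : ℕ):ℝ) ≤ (H:ℝ) := by exact_mod_cast Nat.sub_le H (j:ℕ)
            exact mul_le_mul_of_nonneg_right h4 (by positivity)
    have hlips := aux_lip (f t) (fun v j xj hv hxj => hlip t v j xj hv hxj)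
        (fun j : Fin (H+1) => x (t - H + (j:ℕ))) (fun _ => x t)
        (fun i => hxmem _) (fun i => hxmem t)
    calc f t (fun j : Fin (H+1) => x (t - H + (j:ℕ))) - f t (fun _ => x t)
        ≤ L * ∑ j : Fin (H+1), ‖x (t - H + (j:ℕ)) - x t‖ := hlips
      _ ≤ L * (((H:ℝ)+1) * ((H:ℝ) * (η*Gf))) := by
          apply mul_le_mul_of_nonneg_left _ hL
          calc ∑ j : Fin (H+1), ‖x (t - H + (j:ℕ)) - x t‖
              ≤ ∑ _j : Fin (H+1), (H:ℝ)*(η*Gf) :=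
                Finset.sum_le_sum (fun j _ => hcoord j)
            _ = ((H:ℝ)+1) * ((H:ℝ)*(η*Gf)) := by
                rw [Finset.sum_const, Finset.card_univ, Fintype.card_fin, nsmul_eq_mul]
                push_cast; ring
      _ = (((H:ℝ)+1)*(H:ℝ)) * (L * (η*Gf)) := by ring
      _ ≤ (2*(H:ℝ)^2) * (L * (η*Gf)) := by
          apply mul_le_mul_of_nonneg_right hHH
          positivity
      _ = 2 * L * (H:ℝ)^2 * η * Gf := by ring
  -- OGD per-step regret
  have hkey : ∀ t, f t (fun _ => x t) - f t (fun _ => xstar) ≤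
      (‖x t - xstar‖^2 - ‖x (t+1) - xstar‖^2) / (2*η) + (η/2) * Gf^2 := by
    intro t
    have hgrad : inner ℝ (g t) (xstar - x t) ≤ f t (fun _ => xstar) - f t (fun _ => x t) :=
      aux_grad (hconv t) (hxmem t) hxstar (hdiff t (x t))
    have hconv' : f t (fun _ => x t) - f t (fun _ => xstar)
        ≤ (inner ℝ (g t) (x t - xstar) : ℝ) := by
      have h2 : (inner ℝ (g t) (xstar - x t) : ℝ) = -inner ℝ (g t) (x t - xstar) := by
        rw [← inner_neg_right]; congr 1; abel
      rw [h2] at hgrad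
      linarith
    have hx2 : ‖x (t+1) - xstar‖^2 ≤ ‖(x t - η • g t) - xstar‖^2 := by
      apply pow_le_pow_left₀ (norm_nonneg _) _ 2
      rw [hupd t]
      exact aux_proj 𝒦 hconvK proj hprojmem hproj _ hxstar
    have hexp : ‖(x t - η • g t) - xstar‖^2
        = ‖x t - xstar‖^2 - 2*(η*(inner ℝ (x t - xstar) (g t) : ℝ)) + η^2*‖g t‖^2 := by
      rw [show (x t - η • g t) - xstar = (x t - xstar) - η • g t by abel,
        norm_sub_sq_real, real_inner_smul_right, norm_smul, Real.norm_eq_abs]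
      rw [mul_pow, sq_abs]
      try ring
    have hsymm : (inner ℝ (x t - xstar) (g t) : ℝ) = inner ℝ (g t) (x t - xstar) :=
      real_inner_comm _ _
    have hn2 : ‖g t‖^2 ≤ Gf^2 := pow_le_pow_left₀ (norm_nonneg _) (hGt t) 2
    have h5 : 2*η*(inner ℝ (g t) (x t - xstar) : ℝ)
        ≤ ‖x t - xstar‖^2 - ‖x (t+1) - xstar‖^2 + η^2*Gf^2 := by
      nlinarith [hx2, sq_nonneg η]
    have hc : (inner ℝ (g t) (x t - xstar) : ℝ)
        ≤ (‖x t - xstar‖^2 - ‖x (t+1) - xstar‖^2)/(2*η) + (η/2)*Gf^2 := by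
      rw [show (inner ℝ (g t) (x t - xstar) : ℝ)
          = (2*η*(inner ℝ (g t) (x t - xstar) : ℝ))/(2*η) by field_simp]
      calc (2*η*(inner ℝ (g t) (x t - xstar) : ℝ))/(2*η)
          ≤ (‖x t - xstar‖^2 - ‖x (t+1) - xstar‖^2 + η^2*Gf^2)/(2*η) :=
            (div_le_div_iff_of_pos_right (by positivity)).mpr h5
        _ = (‖x t - xstar‖^2 - ‖x (t+1) - xstar‖^2)/(2*η) + (η/2)*Gf^2 := by
            field_simp
            try ring
    linarith
  -- telescoping
  have htel : ∑ t ∈ Finset.Icc H T, (‖x t - xstar‖^2 - ‖x (t+1) - xstar‖^2)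
      = ‖x H - xstar‖^2 - ‖x (T+1) - xstar‖^2 := by
    rw [← Finset.Ico_add_one_right_eq_Icc, Finset.sum_Ico_eq_sub _ (by omega : H ≤ T+1),
      Finset.sum_range_sub' (fun t => ‖x t - xstar‖^2),
      Finset.sum_range_sub' (fun t => ‖x t - xstar‖^2)]
    ring
  set N := (Finset.Icc H T).card with hNdef
  have hNcard : N = T + 1 - H := Nat.card_Icc H T
  have hNle : (N:ℝ) ≤ 2*T := by
    have : N ≤ T + 1 := by omega
    have h2 : (N:ℝ) ≤ (T:ℝ) + 1 := by exact_mod_cast this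
    have h3 : (1:ℝ) ≤ (T:ℝ) := by exact_mod_cast hT
    linarith
  -- sum of unary regret
  have hsum1 : ∑ t ∈ Finset.Icc H T, (f t (fun _ => x t) - f t (fun _ => xstar))
      ≤ D^2/(2*η) + (N:ℝ) * ((η/2)*Gf^2) := by
    calc ∑ t ∈ Finset.Icc H T, (f t (fun _ => x t) - f t (fun _ => xstar))
        ≤ ∑ t ∈ Finset.Icc H T,
            ((‖x t - xstar‖^2 - ‖x (t+1) - xstar‖^2) / (2*η) + (η/2) * Gf^2) :=
          Finset.sum_le_sum (fun t _ => hkey t)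
      _ = (∑ t ∈ Finset.Icc H T, (‖x t - xstar‖^2 - ‖x (t+1) - xstar‖^2))/(2*η)
            + (N:ℝ) * ((η/2)*Gf^2) := by
          rw [Finset.sum_add_distrib, ← Finset.sum_div, Finset.sum_const, nsmul_eq_mul]
      _ = (‖x H - xstar‖^2 - ‖x (T+1) - xstar‖^2)/(2*η) + (N:ℝ) * ((η/2)*Gf^2) := by
          rw [htel]
      _ ≤ D^2/(2*η) + (N:ℝ) * ((η/2)*Gf^2) := by
          have haH : ‖x H - xstar‖^2 ≤ D^2 :=
            pow_le_pow_left₀ (norm_nonneg _) (hD _ (hxmem H) _ hxstar) 2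
          have h6 : ‖x H - xstar‖^2 - ‖x (T+1) - xstar‖^2 ≤ D^2 := by
            linarith [sq_nonneg ‖x (T+1) - xstar‖, haH]
          have := (div_le_div_iff_of_pos_right (by positivity : (0:ℝ) < 2*η)).mpr h6
          linarith
  -- memory sum
  have hsum2 : ∑ t ∈ Finset.Icc H T,
      (f t (fun j : Fin (H+1) => x (t - H + (j:ℕ))) - f t (fun _ => x t))
      ≤ 2 * (T:ℝ) * L * (H:ℝ)^2 * η * Gf := by
    calc ∑ t ∈ Finset.Icc H T,
        (f t (fun j : Fin (H+1) => x (t - H + (j:ℕ))) - f t (fun _ => x t))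
        ≤ ∑ _t ∈ Finset.Icc H T, (2 * L * (H:ℝ)^2 * η * Gf) :=
          Finset.sum_le_sum hmemb
      _ = (N:ℝ) * (2 * L * (H:ℝ)^2 * η * Gf) := by
          rw [Finset.sum_const, nsmul_eq_mul]
      _ ≤ 2 * (T:ℝ) * L * (H:ℝ)^2 * η * Gf := by
          rcases Nat.eq_zero_or_pos H with h | h
          · subst h; simp
          · have hNT : (N:ℝ) ≤ (T:ℝ) := by
              have : N ≤ T := by omega
              exact_mod_cast this
            have hnn : (0:ℝ) ≤ 2 * L * (H:ℝ)^2 * η * Gf := by positivity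
            nlinarith
  -- final numeric bound
  have hR : Real.sqrt S * Real.sqrt S = S := Real.mul_self_sqrt hS.le
  have hDR : D^2/(2*η) = D * Real.sqrt S / 2 := by
    rw [hηdef]
    field_simp
  have hηS : η * S = D * Real.sqrt S := by
    rw [hηdef, div_mul_eq_mul_div, div_eq_iff hsq.ne', mul_assoc, hR]
  have hkey2 : (T:ℝ)*Gf^2 + 2*(T:ℝ)*L*(H:ℝ)^2*Gf ≤ 2*S := by
    rw [hSdef]
    nlinarith [mul_pos hGf hT']
  have hfinal : D^2/(2*η) + (N:ℝ)*((η/2)*Gf^2) + 2*(T:ℝ)*L*(H:ℝ)^2*η*Gf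
      ≤ 3 * D * Real.sqrt S := by
    have h7 : (N:ℝ)*((η/2)*Gf^2) ≤ (T:ℝ)*η*Gf^2 := by
      have hc : (0:ℝ) ≤ η*Gf^2 := by positivity
      nlinarith [mul_nonneg (sub_nonneg.mpr hNle) hc]
    have h8 : (T:ℝ)*η*Gf^2 + 2*(T:ℝ)*L*(H:ℝ)^2*η*Gf
        = η * ((T:ℝ)*Gf^2 + 2*(T:ℝ)*L*(H:ℝ)^2*Gf) := by ring
    have h9 : η * ((T:ℝ)*Gf^2 + 2*(T:ℝ)*L*(H:ℝ)^2*Gf) ≤ η * (2*S) :=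
      mul_le_mul_of_nonneg_left hkey2 hη.le
    have h10 : η * (2*S) = 2 * (D * Real.sqrt S) := by rw [← hηS]; ring
    have hDRpos : 0 ≤ D * Real.sqrt S := by positivity
    linarith [hDR]
  -- assemble
  have hsplit : ∑ t ∈ Finset.Icc H T, f t (fun j : Fin (H + 1) => x (t - H + (j : ℕ))) -
      ∑ t ∈ Finset.Icc H T, f t (fun _ => xstar)
      = ∑ t ∈ Finset.Icc H T,
          (f t (fun j : Fin (H+1) => x (t - H + (j:ℕ))) - f t (fun _ => x t))
        + ∑ t ∈ Finset.Icc H T, (f t (fun _ => x t) - f t (fun _ => xstar)) := by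
    rw [← Finset.sum_add_distrib, ← Finset.sum_sub_distrib]
    congr 1
    funext t
    ring
  rw [hsplit]
  calc _ ≤ 2 * (T:ℝ) * L * (H:ℝ)^2 * η * Gf + (D^2/(2*η) + (N:ℝ) * ((η/2)*Gf^2)) :=
        add_le_add hsum2 hsum1
    _ ≤ 3 * D * Real.sqrt S := by linarith [hfinal]
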